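/- Let K be a field, I ⊆ K[x_1,...,x_n] a zero-dimensional ideal, A = K[x_1,...,x_n]/I the (finite-dimensional) quotient algebra, and f ∈ K[x_1,...,x_n]. Then the eigenvalues of the multiplication-by-f endomorphism m_f : A → A (over an algebraic closure of K) are exactly the values f(a) for points a in the variety V(I) over the algebraic closure. -/

import Mathlib

open MvPolynomial TensorProduct

set_option maxHeartbeats 1000000
set_option synthInstance.maxHeartbeats 400000

private lemma aux_mulLeft_sub_smul_one {L B : Type*} [CommRing L] [CommRing B] [Algebra L B]
    (b : B) (μ : L) :
    LinearMap.mulLeft L b - μ • (1 : Module.End L B) = LinearMap.mulLeft L (b - μ • 1) := by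
  ext z
  simp [sub_mul, smul_mul_assoc]

private lemma aux_injective_mulLeft_iff {L B : Type*} [Field L] [CommRing B] [Algebra L B]
    [Module.Finite L B] (c : B) :
    Function.Injective (LinearMap.mulLeft L c) ↔ IsUnit c := by
  constructor
  · intro hinj
    obtain ⟨z, hz⟩ := (LinearMap.injective_iff_surjective.mp hinj) 1
    exact IsUnit.of_mul_eq_one (a := c) z (by simpa using hz)
  · intro hu x y hxy
    exact hu.mul_left_cancel (by simpa using hxy)

private lemma aux_nonunit_iff_mem_maximal {B : Type*} [CommRing B] (c : B) :
    ¬ IsUnit c ↔ ∃ M : Ideal B, M.IsMaximal ∧ c ∈ M := by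
  constructor
  · intro h
    obtain ⟨M, hM, hle⟩ := Ideal.exists_le_maximal (Ideal.span {c})
      (fun ht => h (Ideal.span_singleton_eq_top.mp ht))
    exact ⟨M, hM, hle (Ideal.mem_span_singleton_self c)⟩
  · rintro ⟨M, hM, hc⟩ hu
    exact hM.ne_top (M.eq_top_of_isUnit_mem hc hu)

private lemma aux_hasEigenvalue_iff {L B : Type*} [Field L] [CommRing B] [Algebra L B]
    [Module.Finite L B] (b : B) (μ : L) :
    Module.End.HasEigenvalue (LinearMap.mulLeft L b) μ ↔
      ∃ M : Ideal B, M.IsMaximal ∧ b - μ • 1 ∈ M := by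
  rw [Module.End.hasEigenvalue_iff, Module.End.eigenspace_def, aux_mulLeft_sub_smul_one,
    Ne, LinearMap.ker_eq_bot, aux_injective_mulLeft_iff, ← aux_nonunit_iff_mem_maximal]


/-- Eigenvalue theorem: let `I ⊆ K[x_1,…,x_n]` be a
zero-dimensional ideal (i.e. `A = K[x_1,…,x_n]/I` is finite dimensional over
`K`) and `f ∈ K[x_1,…,x_n]`. Then the eigenvalues (over an algebraic closure
of `K`) of the multiplication-by-`f` endomorphism of `A` are exactly the
values of `f` at the points of `V(I)` over the algebraic closure. -/
theorem eigenvalue_theorem (K : Type*) [Field K] (n : ℕ)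
    (I : Ideal (MvPolynomial (Fin n) K))
    (hdim : FiniteDimensional K (MvPolynomial (Fin n) K ⧸ I))
    (f : MvPolynomial (Fin n) K) (μ : AlgebraicClosure K) :
    Module.End.HasEigenvalue
        (LinearMap.baseChange (AlgebraicClosure K)
          (LinearMap.mulLeft K (Ideal.Quotient.mk I f))) μ ↔
      ∃ a : Fin n → AlgebraicClosure K,
        (∀ p ∈ I, MvPolynomial.aeval a p = 0) ∧ MvPolynomial.aeval a f = μ := by
  set b : AlgebraicClosure K ⊗[K] (MvPolynomial (Fin n) K ⧸ I) :=
    (1 : AlgebraicClosure K) ⊗ₜ[K] (Ideal.Quotient.mk I f) with hb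
  -- Step 1: base change of mulLeft is mulLeft of the tensor
  have hbc : LinearMap.baseChange (AlgebraicClosure K)
      (LinearMap.mulLeft K (Ideal.Quotient.mk I f))
      = LinearMap.mulLeft (AlgebraicClosure K) b := by
    apply LinearMap.restrictScalars_injective K
    apply TensorProduct.ext'
    intro x y
    simp [hb, Algebra.TensorProduct.tmul_mul_tmul]
  rw [hbc]
  refine (aux_hasEigenvalue_iff b μ).trans ?_
  -- the surjection φ : (AlgebraicClosure K)[x] → (AlgebraicClosure K) ⊗ A
  set x : Fin n → AlgebraicClosure K ⊗[K] (MvPolynomial (Fin n) K ⧸ I) :=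
    fun i => (1 : AlgebraicClosure K) ⊗ₜ[K] (Ideal.Quotient.mk I (X i)) with hx
  set φ : MvPolynomial (Fin n) (AlgebraicClosure K) →ₐ[AlgebraicClosure K]
      AlgebraicClosure K ⊗[K] (MvPolynomial (Fin n) K ⧸ I) := aeval x with hφdef
  have hφ : ∀ p : MvPolynomial (Fin n) K,
      φ (MvPolynomial.map (algebraMap K (AlgebraicClosure K)) p)
        = (1 : AlgebraicClosure K) ⊗ₜ[K] (Ideal.Quotient.mk I p) := by
    intro p
    set ψ : MvPolynomial (Fin n) K →ₐ[K]
        AlgebraicClosure K ⊗[K] (MvPolynomial (Fin n) K ⧸ I) :=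
      (Algebra.TensorProduct.includeRight).comp (Ideal.Quotient.mkₐ K I) with hψ
    have key : ((φ.restrictScalars K).comp
        (mapAlgHom (R := K) (Algebra.ofId K (AlgebraicClosure K)))) = ψ := by
      apply algHom_ext
      intro i
      simp [hφdef, hψ, hx, Ideal.Quotient.mkₐ_eq_mk, Algebra.ofId_apply]
    have h1 := AlgHom.congr_fun key p
    simp only [AlgHom.coe_comp, AlgHom.coe_restrictScalars', Function.comp_apply] at h1
    have h2 : (mapAlgHom (R := K) (Algebra.ofId K (AlgebraicClosure K))) p
        = MvPolynomial.map (algebraMap K (AlgebraicClosure K)) p := rfl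
    rw [h2] at h1
    rw [h1, hψ]
    simp [Ideal.Quotient.mkₐ_eq_mk]
  have hsurj : Function.Surjective φ := by
    intro z
    induction z using TensorProduct.induction_on with
    | zero => exact ⟨0, map_zero _⟩
    | tmul s m =>
      obtain ⟨p, rfl⟩ := Ideal.Quotient.mk_surjective m
      refine ⟨s • MvPolynomial.map (algebraMap K (AlgebraicClosure K)) p, ?_⟩
      rw [map_smul, hφ, TensorProduct.smul_tmul', smul_eq_mul, mul_one]
    | add u v hu hv =>
      obtain ⟨p, rfl⟩ := hu
      obtain ⟨q, rfl⟩ := hv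
      exact ⟨p + q, map_add _ _ _⟩
  constructor
  · -- maximal ideal → point
    rintro ⟨M, hM, hcM⟩
    haveI := hM
    haveI : (M.comap φ.toRingHom).IsMaximal :=
      Ideal.comap_isMaximal_of_surjective φ.toRingHom hsurj
    obtain ⟨a, ha⟩ := (isMaximal_iff_eq_vanishingIdeal_singleton (I := M.comap φ.toRingHom)).1
      inferInstance
    refine ⟨a, ?_, ?_⟩
    · intro p hp
      have hm : MvPolynomial.map (algebraMap K (AlgebraicClosure K)) p
          ∈ M.comap φ.toRingHom := by
        show φ _ ∈ M
        rw [hφ, Ideal.Quotient.eq_zero_iff_mem.2 hp]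
        simp
      rw [ha, mem_vanishingIdeal_singleton_iff] at hm
      rwa [aeval_def, ← eval_map]
    · have hm : MvPolynomial.map (algebraMap K (AlgebraicClosure K)) f - C μ
          ∈ M.comap φ.toRingHom := by
        show φ _ ∈ M
        rw [map_sub, hφ, aeval_C, Algebra.algebraMap_eq_smul_one]
        exact hcM
      rw [ha, mem_vanishingIdeal_singleton_iff] at hm
      rw [map_sub, aeval_C, sub_eq_zero] at hm
      rw [aeval_def, ← eval_map]; exact hm
  · -- point → maximal ideal
    rintro ⟨a, haI, haf⟩
    refine (aux_nonunit_iff_mem_maximal _).mp ?_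
    intro hu
    set ψ₀ : (MvPolynomial (Fin n) K ⧸ I) →ₐ[K] AlgebraicClosure K :=
      Ideal.Quotient.liftₐ I (aeval a) haI with hψ₀
    set ψ : AlgebraicClosure K ⊗[K] (MvPolynomial (Fin n) K ⧸ I)
        →ₐ[AlgebraicClosure K] AlgebraicClosure K :=
      Algebra.TensorProduct.lift (AlgHom.id _ _) ψ₀ (fun s t => Commute.all _ _) with hψ
    have hψc : ψ (b - μ • 1) = 0 := by
      rw [map_sub, map_smul, (show ψ 1 = 1 from ψ.map_one), hb, hψ, Algebra.TensorProduct.lift_tmul]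
      rw [hψ₀]
      simp only [AlgHom.coe_id, id_eq, map_one, one_mul, Ideal.Quotient.liftₐ_apply,
        Ideal.Quotient.lift_mk, smul_eq_mul, mul_one]
      rw [sub_eq_zero]
      exact haf
    have : IsUnit (ψ (b - μ • 1)) := hu.map ψ.toMonoidHom
    rw [hψc] at this
    exact not_isUnit_zero this
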